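/- Let S₂ be a metric space, let Ω ⊂ ℝⁿ be a nonempty open set, and let φ : S₂ × ℝⁿ → ℝⁿ satisfy the Diffeomorphic Condition with respect to Ω. Then for every nonempty compact set K ⊂ Ω and every s₂ ∈ S₂, the images φ(s₂', K) := {φ(s₂',ω) : ω ∈ K} converge to φ(s₂, K) as s₂' → s₂ both in the Hausdorff metric and in the Fréchet–Nikodym sense; that is, d_H(φ(s₂', K), φ(s₂, K)) → 0 and λⁿ(φ(s₂', K) △ φ(s₂, K)) → 0 as s₂' → s₂, where d_H is the Hausdorff distance between nonempty compact subsets of ℝⁿ, λⁿ is Lebesgue measure on ℝⁿ, and △ denotes symmetric difference. -/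

import Mathlib

open MeasureTheory Filter Topology Set
open scoped ENNReal

noncomputable section

/-- The Diffeomorphic Condition for `φ : S₂ × ℝⁿ → ℝⁿ` with respect to a nonempty open set
`Ω ⊂ ℝⁿ`. -/
structure DiffeoCondition {S₂ : Type*} [TopologicalSpace S₂] {n : ℕ}
    (φ : S₂ → (Fin n → ℝ) → (Fin n → ℝ)) (Ω : Set (Fin n → ℝ)) : Prop where
  cont : ContinuousOn (fun p : S₂ × (Fin n → ℝ) => φ p.1 p.2) (Set.univ ×ˢ Ω)
  diff : ∀ s₂, ∀ ω ∈ Ω, DifferentiableAt ℝ (φ s₂) ω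
  nonsing : ∀ s₂, ∀ ω ∈ Ω, Function.Bijective ⇑(fderiv ℝ (φ s₂) ω)
  jacCont : ContinuousOn (fun p : S₂ × (Fin n → ℝ) => fderiv ℝ (φ p.1) p.2) (Set.univ ×ˢ Ω)
  inj : ∀ s₂, Set.InjOn (φ s₂) Ω

/-- If `F : X → Y → Z` is jointly continuous at every point of `{x} × K` with `K` compact,
then `F x'` converges to `F x` uniformly on `K` as `x' → x` (ε-version). -/
private lemma aux_unif {X Y Z : Type*} [TopologicalSpace X] [PseudoMetricSpace Y]
    [PseudoMetricSpace Z] {F : X → Y → Z} {x : X} {K : Set Y} (hK : IsCompact K)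
    (h : ∀ ω ∈ K, ContinuousAt (fun p : X × Y => F p.1 p.2) (x, ω))
    {ε : ℝ} (hε : 0 < ε) :
    ∀ᶠ x' in 𝓝 x, ∀ ω ∈ K, dist (F x' ω) (F x ω) < ε := by
  have key : ∀ ω ∈ K, ∃ r > (0 : ℝ), ∃ U ∈ 𝓝 x,
      ∀ x' ∈ U, ∀ y ∈ Metric.ball ω r, dist (F x' y) (F x ω) < ε / 2 := by
    intro ω hω
    have h2 : ∀ᶠ p : X × Y in 𝓝 (x, ω), dist (F p.1 p.2) (F x ω) < ε / 2 :=
      Metric.tendsto_nhds.mp (h ω hω) (ε / 2) (half_pos hε)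
    rw [nhds_prod_eq, Filter.eventually_prod_iff] at h2
    obtain ⟨pa, hpa, pb, hpb, hpab⟩ := h2
    obtain ⟨r, hr, hball⟩ := Metric.eventually_nhds_iff_ball.mp hpb
    exact ⟨r, hr, {a | pa a}, hpa, fun x' hx' y hy => hpab hx' (hball y hy)⟩
  choose! r hr U hU hUF using key
  obtain ⟨t, htK, htfin, hcover⟩ := hK.elim_finite_subcover_image
    (fun ω _ => Metric.isOpen_ball)
    (fun z hz => Set.mem_biUnion hz (Metric.mem_ball_self (hr z hz)))
  have hUmem : (⋂ ω ∈ t, U ω) ∈ 𝓝 x :=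
    (Filter.biInter_mem htfin).mpr fun ω hω => hU ω (htK hω)
  filter_upwards [hUmem] with x' hx' ω hω
  obtain ⟨ω₀, hω₀, hωb⟩ := Set.mem_iUnion₂.mp (hcover hω)
  have hx'U : x' ∈ U ω₀ := (Set.mem_iInter₂.mp hx') ω₀ hω₀
  have h1 := hUF ω₀ (htK hω₀) x' hx'U ω hωb
  have h2 := hUF ω₀ (htK hω₀) x (mem_of_mem_nhds (hU ω₀ (htK hω₀))) ω hωb
  calc dist (F x' ω) (F x ω) ≤ dist (F x' ω) (F x ω₀) + dist (F x ω₀) (F x ω) :=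
        dist_triangle _ _ _
    _ < ε / 2 + ε / 2 := add_lt_add h1 (by rw [dist_comm] at h2 ⊢; rw [dist_comm]; exact h2)
    _ = ε := add_halves ε

/-- Convergence of lower integrals of `ENNReal.ofReal`-valued integrands under uniform
convergence on a finite-measure set. -/
private lemma aux_lintegral {X : Type*} [TopologicalSpace X] {α : Type*} [MeasurableSpace α]
    {μ : Measure α} {K : Set α} (hKm : MeasurableSet K) (hKfin : μ K ≠ ∞)
    {F : X → α → ℝ} {g : α → ℝ} {x : X}
    (hg : ∫⁻ ω in K, ENNReal.ofReal (g ω) ∂μ ≠ ∞)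
    (hunif : ∀ ε : ℝ, 0 < ε → ∀ᶠ x' in 𝓝 x, ∀ ω ∈ K, dist (F x' ω) (g ω) < ε) :
    Tendsto (fun x' => ∫⁻ ω in K, ENNReal.ofReal (F x' ω) ∂μ) (𝓝 x)
      (𝓝 (∫⁻ ω in K, ENNReal.ofReal (g ω) ∂μ)) := by
  rw [ENNReal.tendsto_nhds hg]
  intro ε hε
  have hden0 : μ K + 1 ≠ 0 := by simp
  have hdenT : μ K + 1 ≠ ∞ := ENNReal.add_ne_top.mpr ⟨hKfin, ENNReal.one_ne_top⟩
  set c : ℝ≥0∞ := ε / (μ K + 1) with hc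
  have hc0 : 0 < c := ENNReal.div_pos hε.ne' hdenT
  have hmin_ne : min 1 c ≠ ∞ := ne_top_of_le_ne_top ENNReal.one_ne_top (min_le_left _ _)
  have hmin0 : min 1 c ≠ 0 := (lt_min one_pos hc0).ne'
  set δ : ℝ := (min 1 c).toReal with hδdef
  have hδpos : 0 < δ := ENNReal.toReal_pos hmin0 hmin_ne
  have hofδ : ENNReal.ofReal δ = min 1 c := ENNReal.ofReal_toReal hmin_ne
  have hδK : ENNReal.ofReal δ * μ K ≤ ε := by
    have h1 : c * (μ K + 1) ≤ ε :=
      (ENNReal.le_div_iff_mul_le (Or.inl hden0) (Or.inl hdenT)).mp le_rfl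
    calc ENNReal.ofReal δ * μ K ≤ c * (μ K + 1) := by
          rw [hofδ]; exact mul_le_mul' (min_le_right _ _) le_self_add
      _ ≤ ε := h1
  have hconst : (∫⁻ _ in K, ENNReal.ofReal δ ∂μ) = ENNReal.ofReal δ * μ K :=
    setLIntegral_const K _
  filter_upwards [hunif δ hδpos] with x' hx'
  have hub : ∫⁻ ω in K, ENNReal.ofReal (F x' ω) ∂μ
      ≤ (∫⁻ ω in K, ENNReal.ofReal (g ω) ∂μ) + ε := by
    have mono1 : ∫⁻ ω in K, ENNReal.ofReal (F x' ω) ∂μ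
        ≤ ∫⁻ ω in K, (ENNReal.ofReal (g ω) + ENNReal.ofReal δ) ∂μ := by
      refine lintegral_mono_ae ((ae_restrict_iff' hKm).mpr (ae_of_all _ fun ω hω => ?_))
      have hd := hx' ω hω
      rw [Real.dist_eq] at hd
      have : F x' ω ≤ g ω + δ := by
        have := (abs_lt.mp hd).2; linarith
      exact (ENNReal.ofReal_le_ofReal this).trans ENNReal.ofReal_add_le
    rw [lintegral_add_right _ measurable_const, hconst] at mono1
    exact mono1.trans (add_le_add_right hδK _)
  have hlb : (∫⁻ ω in K, ENNReal.ofReal (g ω) ∂μ) - ε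
      ≤ ∫⁻ ω in K, ENNReal.ofReal (F x' ω) ∂μ := by
    rw [tsub_le_iff_right]
    have mono2 : ∫⁻ ω in K, ENNReal.ofReal (g ω) ∂μ
        ≤ ∫⁻ ω in K, (ENNReal.ofReal (F x' ω) + ENNReal.ofReal δ) ∂μ := by
      refine lintegral_mono_ae ((ae_restrict_iff' hKm).mpr (ae_of_all _ fun ω hω => ?_))
      have hd := hx' ω hω
      rw [Real.dist_eq] at hd
      have : g ω ≤ F x' ω + δ := by
        have := (abs_lt.mp hd).1; linarith
      exact (ENNReal.ofReal_le_ofReal this).trans ENNReal.ofReal_add_le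
    rw [lintegral_add_right _ measurable_const, hconst] at mono2
    exact mono2.trans (add_le_add_right hδK _)
  exact ⟨hlb, hub⟩

/-- Images `φ(s₂',K)` of a compact set `K ⊂ Ω` under a function satisfying the Diffeomorphic
Condition converge, as `s₂' → s₂`, to `φ(s₂,K)` both in the Hausdorff metric and in the
Fréchet–Nikodym sense (Lebesgue measure of the symmetric difference tends to zero). -/
theorem images_converge_hausdorff_and_frechetNikodym
    {S₂ : Type*} [MetricSpace S₂] {n : ℕ}
    (Ω : Set (Fin n → ℝ)) (hΩopen : IsOpen Ω) (hΩne : Ω.Nonempty)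
    (φ : S₂ → (Fin n → ℝ) → (Fin n → ℝ)) (hφ : DiffeoCondition φ Ω)
    (K : Set (Fin n → ℝ)) (hKne : K.Nonempty) (hKcomp : IsCompact K) (hKΩ : K ⊆ Ω) :
    ∀ s₂ : S₂,
      Filter.Tendsto (fun s₂' => Metric.hausdorffDist (φ s₂' '' K) (φ s₂ '' K))
        (𝓝 s₂) (𝓝 0) ∧
      Filter.Tendsto (fun s₂' => volume (symmDiff (φ s₂' '' K) (φ s₂ '' K)))
        (𝓝 s₂) (𝓝 0) := by
  intro s
  -- slice continuity
  have contφ : ∀ s' : S₂, ContinuousOn (φ s') Ω := by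
    intro s'
    have : ContinuousOn ((fun p : S₂ × (Fin n → ℝ) => φ p.1 p.2) ∘ fun ω => (s', ω)) Ω :=
      hφ.cont.comp ((continuous_const.prodMk continuous_id).continuousOn)
        (fun ω hω => ⟨mem_univ _, hω⟩)
    exact this
  have hAcomp : ∀ s' : S₂, IsCompact (φ s' '' K) :=
    fun s' => hKcomp.image_of_continuousOn ((contφ s').mono hKΩ)
  have hcontAt : ∀ ω ∈ K, ContinuousAt (fun p : S₂ × (Fin n → ℝ) => φ p.1 p.2) (s, ω) :=
    fun ω hω => hφ.cont.continuousAt ((isOpen_univ.prod hΩopen).mem_nhds ⟨mem_univ _, hKΩ hω⟩)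
  have hunifφ : ∀ ε : ℝ, 0 < ε → ∀ᶠ s' in 𝓝 s, ∀ ω ∈ K, dist (φ s' ω) (φ s ω) < ε :=
    fun ε hε => aux_unif hKcomp hcontAt hε
  constructor
  · -- Hausdorff convergence
    rw [Metric.tendsto_nhds]
    intro ε hε
    filter_upwards [hunifφ (ε / 2) (half_pos hε)] with s' hs'
    have hle : Metric.hausdorffDist (φ s' '' K) (φ s '' K) ≤ ε / 2 := by
      apply Metric.hausdorffDist_le_of_mem_dist (half_pos hε).le
      · rintro y ⟨ω, hω, rfl⟩
        exact ⟨φ s ω, mem_image_of_mem _ hω, (hs' ω hω).le⟩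
      · rintro y ⟨ω, hω, rfl⟩
        exact ⟨φ s' ω, mem_image_of_mem _ hω, by rw [dist_comm]; exact (hs' ω hω).le⟩
    rw [Real.dist_0_eq_abs, abs_of_nonneg Metric.hausdorffDist_nonneg]
    exact lt_of_le_of_lt hle (half_lt_self hε)
  · -- Fréchet–Nikodym convergence
    set A : Set (Fin n → ℝ) := φ s '' K with hA
    have hAfin : volume A ≠ ∞ := (hAcomp s).measure_lt_top.ne
    have hAm : MeasurableSet A := (hAcomp s).isClosed.measurableSet
    have hKm : MeasurableSet K := hKcomp.isClosed.measurableSet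
    have hKfin : volume K ≠ ∞ := hKcomp.measure_lt_top.ne
    -- change of variables
    have hvol : ∀ s' : S₂, volume (φ s' '' K)
        = ∫⁻ ω in K, ENNReal.ofReal |(fderiv ℝ (φ s') ω).det| := fun s' =>
      (lintegral_abs_det_fderiv_eq_addHaar_image volume hKm
        (fun ω hω => (hφ.diff s' ω (hKΩ hω)).hasFDerivAt.hasFDerivWithinAt)
        ((hφ.inj s').mono hKΩ)).symm
    -- Step 1: the measure of `φ s' '' K \ A` tends to zero
    have h1 : Tendsto (fun s' => volume (φ s' '' K \ A)) (𝓝 s) (𝓝 0) := by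
      rw [ENNReal.tendsto_nhds_zero]
      intro ε hε
      have hth : Tendsto (fun r => volume (Metric.cthickening r A)) (𝓝 0) (𝓝 (volume A)) :=
        tendsto_measure_cthickening_of_isClosed
          ⟨1, one_pos, ((hAcomp s).cthickening.measure_lt_top.ne)⟩ (hAcomp s).isClosed
      have hev : ∀ᶠ r in 𝓝 (0 : ℝ), volume (Metric.cthickening r A) < volume A + ε :=
        hth.eventually_lt_const (ENNReal.lt_add_right hAfin hε.ne')
      obtain ⟨r, hr0, hrlt⟩ : ∃ r > (0 : ℝ), volume (Metric.cthickening r A) < volume A + ε := by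
        obtain ⟨a, ha, hball⟩ := Metric.eventually_nhds_iff_ball.mp hev
        refine ⟨a / 2, half_pos ha, hball _ ?_⟩
        rw [Metric.mem_ball, Real.dist_0_eq_abs, abs_of_pos (half_pos ha)]
        exact half_lt_self ha
      filter_upwards [hunifφ r hr0] with s' hs'
      have hsub : φ s' '' K ⊆ Metric.cthickening r A := by
        rintro y ⟨ω, hω, rfl⟩
        exact Metric.mem_cthickening_of_dist_le _ _ r A (mem_image_of_mem _ hω) (hs' ω hω).le
      calc volume (φ s' '' K \ A) ≤ volume (Metric.cthickening r A \ A) :=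
            measure_mono (diff_subset_diff_left hsub)
        _ = volume (Metric.cthickening r A) - volume A :=
            measure_diff (Metric.self_subset_cthickening A) hAm.nullMeasurableSet hAfin
        _ ≤ (volume A + ε) - volume A := tsub_le_tsub_right hrlt.le _
        _ = ε := by rw [ENNReal.add_sub_cancel_left hAfin]
    -- Step 2: the measure of `φ s' '' K` tends to the measure of `A`
    have h2 : Tendsto (fun s' => volume (φ s' '' K)) (𝓝 s) (𝓝 (volume A)) := by
      have hcontdet : ∀ ω ∈ K, ContinuousAt
          (fun p : S₂ × (Fin n → ℝ) => |(fderiv ℝ (φ p.1) p.2).det|) (s, ω) := by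
        intro ω hω
        exact (continuous_abs.comp ContinuousLinearMap.continuous_det).continuousAt.comp
          (hφ.jacCont.continuousAt ((isOpen_univ.prod hΩopen).mem_nhds ⟨mem_univ _, hKΩ hω⟩))
      have hunifdet : ∀ ε : ℝ, 0 < ε → ∀ᶠ s' in 𝓝 s, ∀ ω ∈ K,
          dist |(fderiv ℝ (φ s') ω).det| |(fderiv ℝ (φ s) ω).det| < ε :=
        fun ε hε => aux_unif (F := fun s' ω => |(fderiv ℝ (φ s') ω).det|) hKcomp hcontdet hε
      have hcontg : ContinuousOn (fun ω => |(fderiv ℝ (φ s) ω).det|) K := by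
        have h0 : ContinuousOn (fun p : S₂ × (Fin n → ℝ) => |(fderiv ℝ (φ p.1) p.2).det|)
            (Set.univ ×ˢ Ω) :=
          (continuous_abs.comp ContinuousLinearMap.continuous_det).comp_continuousOn hφ.jacCont
        have : ContinuousOn ((fun p : S₂ × (Fin n → ℝ) => |(fderiv ℝ (φ p.1) p.2).det|)
            ∘ fun ω => (s, ω)) Ω :=
          h0.comp ((continuous_const.prodMk continuous_id).continuousOn)
            (fun ω hω => ⟨mem_univ _, hω⟩)
        exact this.mono hKΩ
      have hgfin : ∫⁻ ω in K, ENNReal.ofReal |(fderiv ℝ (φ s) ω).det| ≠ ∞ := by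
        obtain ⟨M, hM⟩ := hKcomp.exists_bound_of_continuousOn hcontg
        have hbound : ∫⁻ ω in K, ENNReal.ofReal |(fderiv ℝ (φ s) ω).det|
            ≤ ∫⁻ _ in K, ENNReal.ofReal M := by
          refine lintegral_mono_ae ((ae_restrict_iff' hKm).mpr (ae_of_all _ fun ω hω => ?_))
          have := hM ω hω
          rw [Real.norm_eq_abs, abs_abs] at this
          exact ENNReal.ofReal_le_ofReal this
        rw [setLIntegral_const] at hbound
        exact ne_top_of_le_ne_top
          (ENNReal.mul_ne_top ENNReal.ofReal_ne_top hKfin) hbound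
      have := aux_lintegral (μ := volume) hKm hKfin hgfin hunifdet
      simpa only [← hvol] using this
    -- combine
    have hsub2 : Tendsto (fun s' => volume A - volume (φ s' '' K)) (𝓝 s) (𝓝 0) := by
      have := ENNReal.Tendsto.sub (tendsto_const_nhds : Tendsto _ (𝓝 s) (𝓝 (volume A))) h2 (Or.inl hAfin)
      simpa using this
    have hB : Tendsto (fun s' => volume (φ s' '' K \ A)
        + ((volume A - volume (φ s' '' K)) + volume (φ s' '' K \ A))) (𝓝 s) (𝓝 0) := by
      have := h1.add (hsub2.add h1)
      simpa using this
    have hbound : ∀ s' : S₂, volume (symmDiff (φ s' '' K) A)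
        ≤ volume (φ s' '' K \ A) + ((volume A - volume (φ s' '' K)) + volume (φ s' '' K \ A)) := by
      intro s'
      set A' : Set (Fin n → ℝ) := φ s' '' K with hA'
      have hA'm : MeasurableSet A' := (hAcomp s').isClosed.measurableSet
      have hA'fin : volume A' ≠ ∞ := (hAcomp s').measure_lt_top.ne
      have key : volume (A \ A') + volume A' = volume A + volume (A' \ A) := by
        have e1 := measure_inter_add_diff (μ := volume) A hA'm
        have e2 := measure_inter_add_diff (μ := volume) A' hAm
        calc volume (A \ A') + volume A'
            = volume (A \ A') + (volume (A' ∩ A) + volume (A' \ A)) := by rw [e2]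
          _ = (volume (A ∩ A') + volume (A \ A')) + volume (A' \ A) := by
              rw [inter_comm A' A]; ring
          _ = volume A + volume (A' \ A) := by rw [e1]
      have hdiff : volume (A \ A') ≤ (volume A - volume A') + volume (A' \ A) := by
        have hx : volume (A \ A') = (volume A + volume (A' \ A)) - volume A' :=
          ENNReal.eq_sub_of_add_eq hA'fin key
        rw [hx, tsub_le_iff_right]
        calc volume A + volume (A' \ A)
            ≤ ((volume A - volume A') + volume A') + volume (A' \ A) :=
              add_le_add_left le_tsub_add _
          _ = ((volume A - volume A') + volume (A' \ A)) + volume A' := by ring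
      calc volume (symmDiff A' A) ≤ volume (A' \ A) + volume (A \ A') := by
            rw [Set.symmDiff_def]; exact measure_union_le _ _
        _ ≤ volume (A' \ A) + ((volume A - volume A') + volume (A' \ A)) :=
            add_le_add_right hdiff _
    exact tendsto_of_tendsto_of_tendsto_of_le_of_le tendsto_const_nhds hB
      (fun s' => zero_le) hbound

end
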